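/- Let X be a standardized recursive max-linear model satisfying a_{ℓℓ}>a_{kℓ} for k≠ℓ. For a≥1, I⊆V, and i,j∈I^c with i≠j, the scaled max-projection M_{i,aj,aI} = X_i ∨ aX_j ∨ max_{k∈I} aX_k has squared scaling σ²_{M_{i,aj,aI}} = Σ_{ℓ∈I∪{j}} a² a_{ℓℓ}² + Σ_{ℓ∈(I∪{j})^c} ( a_{iℓ}² ∨ max_{k∈I∪{j}} a² a_{kℓ}² ). -/

import Mathlib

open scoped BigOperators

section helpers
variable {ι : Type*} [Fintype ι] [DecidableEq ι]

private lemma fold_max_nonneg (s : Finset ι) (f : ι → ℝ) :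
    0 ≤ s.fold max 0 f := by
  induction s using Finset.induction_on with
  | empty => simp
  | insert x t hx ih => simp only [Finset.fold_insert hx]; exact le_trans ih (le_max_right _ _)

private lemma mem_le_fold (s : Finset ι) (f : ι → ℝ) {k : ι} (hk : k ∈ s) :
    f k ≤ s.fold max 0 f := by
  induction s using Finset.induction_on with
  | empty => simp at hk
  | @insert x t hx ih =>
      rw [Finset.fold_insert hx]
      rcases Finset.mem_insert.1 hk with h | h
      · exact h ▸ le_max_left _ _
      · exact le_trans (ih h) (le_max_right _ _)

private lemma fold_le (s : Finset ι) (f : ι → ℝ) {c : ℝ} (hc : 0 ≤ c)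
    (h : ∀ k ∈ s, f k ≤ c) : s.fold max 0 f ≤ c := by
  induction s using Finset.induction_on with
  | empty => simpa
  | @insert x t hx ih =>
      rw [Finset.fold_insert hx]
      exact max_le (h x (Finset.mem_insert_self _ _))
        (ih fun k hk => h k (Finset.mem_insert_of_mem hk))

private lemma mem_le_biSup (s : Finset ι) (f : ι → ℝ) {k : ι} (hk : k ∈ s) :
    f k ≤ ⨆ k ∈ s, f k := by
  have h1 : (⨆ _ : k ∈ s, f k) = f k := ciSup_pos hk
  rw [← h1]
  exact le_ciSup (f := fun k => ⨆ _ : k ∈ s, f k) (Set.Finite.bddAbove (Set.finite_range _)) k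

private lemma biSup_eq_fold (s : Finset ι) (f : ι → ℝ) (hf : ∀ k, 0 ≤ f k) :
    (⨆ k ∈ s, f k) = s.fold max 0 f := by
  apply le_antisymm
  · refine Real.iSup_le (fun k => Real.iSup_le (fun hk => mem_le_fold s f hk) ?_) ?_
    · exact fold_max_nonneg s f
    · exact fold_max_nonneg s f
  · refine fold_le s f ?_ (fun k hk => mem_le_biSup s f hk)
    exact Real.iSup_nonneg fun k => Real.iSup_nonneg fun _ => hf k

private lemma sq_max (x y : ℝ) (hx : 0 ≤ x) (hy : 0 ≤ y) :
    (x ⊔ y) ^ 2 = x ^ 2 ⊔ y ^ 2 := by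
  rcases le_total x y with h | h
  · rw [max_eq_right h, max_eq_right (pow_le_pow_left₀ hx h 2)]
  · rw [max_eq_left h, max_eq_left (pow_le_pow_left₀ hy h 2)]

private lemma fold_sq (s : Finset ι) (f : ι → ℝ) (hf : ∀ k, 0 ≤ f k) :
    (s.fold max 0 f) ^ 2 = s.fold max 0 (fun k => (f k) ^ 2) := by
  induction s using Finset.induction_on with
  | empty => simp
  | @insert x t hx ih =>
      rw [Finset.fold_insert hx, Finset.fold_insert hx,
        sq_max _ _ (hf x) (fold_max_nonneg t f), ih]

end helpers

/-- For a standardized recursive max-linear model with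
a_{ℓℓ} > a_{kℓ} for k ≠ ℓ, for a ≥ 1, I ⊆ V and i, j ∈ Iᶜ with i ≠ j, the
scaled max-projection M_{i,aj,aI} = X_i ∨ aX_j ∨ max_{k∈I} aX_k, whose
coefficient on Z_ℓ is b_ℓ = a_{iℓ} ∨ a a_{jℓ} ∨ max_{k∈I} a a_{kℓ}, has
squared scaling Σ_ℓ b_ℓ² = Σ_{ℓ∈I∪{j}} a² a_{ℓℓ}²
+ Σ_{ℓ∈(I∪{j})ᶜ} ( a_{iℓ}² ∨ max_{k∈I∪{j}} a² a_{kℓ}² ). -/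
theorem scaled_max_projection_scaling {d : ℕ} (A : Fin d → Fin d → ℝ)
    (hnn : ∀ i j, 0 ≤ A i j)
    (hrow : ∀ i, ∑ j, (A i j) ^ 2 = 1)
    (hdiag : ∀ ℓ k, k ≠ ℓ → A k ℓ < A ℓ ℓ)
    (a : ℝ) (ha : 1 ≤ a) (I : Finset (Fin d)) (i j : Fin d)
    (hi : i ∉ I) (hj : j ∉ I) (hij : i ≠ j) :
    (∑ ℓ, ((A i ℓ) ⊔ (a * A j ℓ) ⊔ (⨆ k ∈ I, a * A k ℓ)) ^ 2)
      = (∑ ℓ ∈ insert j I, a ^ 2 * (A ℓ ℓ) ^ 2)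
        + ∑ ℓ ∈ (insert j I)ᶜ,
            ((A i ℓ) ^ 2 ⊔ (⨆ k ∈ insert j I, a ^ 2 * (A k ℓ) ^ 2)) := by
  classical
  have ha0 : (0:ℝ) ≤ a := zero_le_one.trans ha
  rw [← Finset.sum_add_sum_compl (insert j I)
    (fun ℓ => ((A i ℓ) ⊔ (a * A j ℓ) ⊔ (⨆ k ∈ I, a * A k ℓ)) ^ 2)]
  congr 1
  · apply Finset.sum_congr rfl
    intro ℓ hℓ
    have hnnI : ∀ k, 0 ≤ a * A k ℓ := fun k => mul_nonneg ha0 (hnn k ℓ)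
    rw [biSup_eq_fold I (fun k => a * A k ℓ) hnnI]
    have hiℓ : i ≠ ℓ := by
      rintro rfl
      rcases Finset.mem_insert.1 hℓ with h | h
      · exact hij h
      · exact hi h
    have hAle : ∀ k, A k ℓ ≤ A ℓ ℓ := by
      intro k
      by_cases hk : k = ℓ
      · exact hk ▸ le_rfl
      · exact (hdiag ℓ k hk).le
    have hb : A i ℓ ⊔ a * A j ℓ ⊔ I.fold max 0 (fun k => a * A k ℓ) = a * A ℓ ℓ := by
      apply le_antisymm
      · refine max_le (max_le ?_ ?_) ?_
        · exact le_trans ((hdiag ℓ i hiℓ).le.trans (le_mul_of_one_le_left (hnn ℓ ℓ) ha))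
            le_rfl
        · exact mul_le_mul_of_nonneg_left (hAle j) ha0
        · exact fold_le _ _ (mul_nonneg ha0 (hnn ℓ ℓ))
            (fun k _ => mul_le_mul_of_nonneg_left (hAle k) ha0)
      · rcases Finset.mem_insert.1 hℓ with h | h
        · subst h
          exact le_trans (le_max_right _ _) (le_max_left _ _)
        · exact le_trans (mem_le_fold I (fun k => a * A k ℓ) h) (le_max_right _ _)
    rw [hb]; ring
  · apply Finset.sum_congr rfl
    intro ℓ hℓ
    have hnnI : ∀ k, 0 ≤ a * A k ℓ := fun k => mul_nonneg ha0 (hnn k ℓ)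
    rw [biSup_eq_fold I (fun k => a * A k ℓ) hnnI,
      biSup_eq_fold (insert j I) (fun k => a ^ 2 * (A k ℓ) ^ 2)
        (fun k => by positivity),
      Finset.fold_insert hj]
    have h1 : I.fold max 0 (fun k => a ^ 2 * (A k ℓ) ^ 2)
        = I.fold max 0 (fun k => (a * A k ℓ) ^ 2) := by
      apply Finset.fold_congr; intro k _; ring
    have h2 : a ^ 2 * (A j ℓ) ^ 2 = (a * A j ℓ) ^ 2 := by ring
    rw [h1, ← fold_sq I (fun k => a * A k ℓ) hnnI, h2,
      sq_max _ _ (le_max_of_le_left (hnn i ℓ)) (fold_max_nonneg _ _),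
      sq_max _ _ (hnn i ℓ) (hnnI j), max_assoc]
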